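/- Every envy cycle elimination step strictly decreases the number of edges in the envy graph: if X is an allocation whose envy graph contains a directed cycle C, and X' is obtained from X by reallocating bundles along C, then the number of edges of the envy graph of X' is strictly less than that of X. Consequently, between any two steps that assign a new item, at most n² − 1 consecutive cycle-elimination steps can occur. -/

import Mathlib

open scoped Classical

/-- `X'` is obtained from `X` by eliminating an envy cycle: there is an
injective cycle `u₁, …, u_k` of agents, each strictly envying the next one
(cyclically), each receiving the next agent's bundle, with all other bundles
unchanged. -/
def CycleElim {n : ℕ} {ι : Type*} (v : Fin n → Finset ι → ℝ)
    (X X' : Fin n → Finset ι) : Prop :=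
  ∃ (k : ℕ) (hk : 0 < k) (u : Fin k → Fin n), Function.Injective u ∧
    (∀ t : Fin k,
      v (u t) (X (u t)) < v (u t) (X (u ⟨(t.val + 1) % k, Nat.mod_lt _ hk⟩))) ∧
    (∀ t : Fin k, X' (u t) = X (u ⟨(t.val + 1) % k, Nat.mod_lt _ hk⟩)) ∧
    (∀ i, (∀ t, u t ≠ i) → X' i = X i)

/-- The set of edges of the envy graph of the allocation `X`. -/
noncomputable def envyEdges {n : ℕ} {ι : Type*} (v : Fin n → Finset ι → ℝ)
    (X : Fin n → Finset ι) : Finset (Fin n × Fin n) :=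
  Finset.univ.filter fun p => v p.1 (X p.1) < v p.1 (X p.2)

lemma cycleElim_card_lt {n : ℕ} {ι : Type*} (v : Fin n → Finset ι → ℝ)
    (X X' : Fin n → Finset ι) (h : CycleElim v X X') :
    (envyEdges v X').card < (envyEdges v X).card := by
  classical
  obtain ⟨k, hk, u, hu, henvy, hX', hfix⟩ := h
  -- the permutation that sends each agent to the source of its new bundle
  set σ : Fin n → Fin n := fun i =>
    if h : ∃ t, u t = i then
      u ⟨((Classical.choose h).val + 1) % k, Nat.mod_lt _ hk⟩
    else i with hσdef
  have hmodinj : ∀ a b : Fin k, (a.val + 1) % k = (b.val + 1) % k → a = b := by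
    intro a b hab
    have ha := a.isLt
    have hb := b.isLt
    rcases Nat.lt_or_ge (a.val + 1) k with h1 | h1 <;>
      rcases Nat.lt_or_ge (b.val + 1) k with h2 | h2
    · rw [Nat.mod_eq_of_lt h1, Nat.mod_eq_of_lt h2] at hab
      exact Fin.ext (by omega)
    · have hb1 : b.val + 1 = k := by omega
      rw [Nat.mod_eq_of_lt h1, hb1, Nat.mod_self] at hab
      omega
    · have ha1 : a.val + 1 = k := by omega
      rw [Nat.mod_eq_of_lt h2, ha1, Nat.mod_self] at hab
      omega
    · exact Fin.ext (by omega)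
  have hσspec : ∀ i, X' i = X (σ i) := by
    intro i
    by_cases h : ∃ t, u t = i
    · have hc : u (Classical.choose h) = i := Classical.choose_spec h
      simp only [hσdef, dif_pos h]
      conv_lhs => rw [← hc]
      exact hX' (Classical.choose h)
    · simp only [hσdef, dif_neg h]
      exact hfix i (fun t ht => h ⟨t, ht⟩)
  have hσinj : Function.Injective σ := by
    intro a b hab
    by_cases hA : ∃ t, u t = a <;> by_cases hB : ∃ t, u t = b
    · have hca : u (Classical.choose hA) = a := Classical.choose_spec hA
      have hcb : u (Classical.choose hB) = b := Classical.choose_spec hB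
      simp only [hσdef, dif_pos hA, dif_pos hB] at hab
      have := hu hab
      have h2 := hmodinj _ _ (congrArg Fin.val this)
      rw [← hca, ← hcb, h2]
    · exfalso
      simp only [hσdef, dif_pos hA, dif_neg hB] at hab
      exact hB ⟨_, hab⟩
    · exfalso
      simp only [hσdef, dif_neg hA, dif_pos hB] at hab
      exact hA ⟨_, hab.symm⟩
    · simpa only [hσdef, dif_neg hA, dif_neg hB] using hab
  have hge : ∀ i, v i (X i) ≤ v i (X' i) := by
    intro i
    by_cases h : ∃ t, u t = i
    · obtain ⟨t, ht⟩ := h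
      rw [← ht, hX' t]
      exact le_of_lt (henvy t)
    · rw [hfix i (fun t ht => h ⟨t, ht⟩)]
  set f : Fin n × Fin n → Fin n × Fin n := fun p => (p.1, σ p.2) with hfdef
  have hfinj : Function.Injective f := by
    intro p q hpq
    simp only [hfdef, Prod.mk.injEq] at hpq
    exact Prod.ext hpq.1 (hσinj hpq.2)
  have himg : (envyEdges v X').image f ⊆ envyEdges v X := by
    intro p hp
    simp only [Finset.mem_image] at hp
    obtain ⟨q, hq, hfq⟩ := hp
    simp only [envyEdges, Finset.mem_filter, Finset.mem_univ, true_and] at hq ⊢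
    rw [← hfq]
    simp only [hfdef]
    calc v q.1 (X q.1) ≤ v q.1 (X' q.1) := hge q.1
      _ < v q.1 (X' q.2) := hq
      _ = v q.1 (X (σ q.2)) := by rw [hσspec]
  set t0 : Fin k := ⟨0, hk⟩ with ht0
  set t1 : Fin k := ⟨(t0.val + 1) % k, Nat.mod_lt _ hk⟩ with ht1
  set e0 : Fin n × Fin n := (u t0, u t1) with he0
  have he0mem : e0 ∈ envyEdges v X := by
    simp only [envyEdges, Finset.mem_filter, Finset.mem_univ, true_and]
    exact henvy t0
  have he0nimg : e0 ∉ (envyEdges v X').image f := by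
    intro hmem
    simp only [Finset.mem_image] at hmem
    obtain ⟨q, hq, hfq⟩ := hmem
    simp only [hfdef, he0, Prod.mk.injEq] at hfq
    simp only [envyEdges, Finset.mem_filter, Finset.mem_univ, true_and] at hq
    have : v q.1 (X' q.2) = v q.1 (X' q.1) := by
      rw [hσspec q.2, hfq.2, hfq.1, hX' t0]
    rw [this] at hq
    exact lt_irrefl _ hq
  have hss : (envyEdges v X').image f ⊂ envyEdges v X :=
    ⟨himg, fun hle => he0nimg (hle he0mem)⟩
  calc (envyEdges v X').card = ((envyEdges v X').image f).card :=
        (Finset.card_image_of_injective _ hfinj).symm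
    _ < (envyEdges v X).card := Finset.card_lt_card hss

/-- Every envy cycle elimination step strictly decreases the number of edges of
the envy graph; consequently at most `n² − 1` consecutive cycle-elimination
steps can occur. -/
theorem stmt_19 {n : ℕ} {ι : Type*}
    (v : Fin n → Finset ι → ℝ)
    (hmono : ∀ i, ∀ S T : Finset ι, S ⊆ T → v i S ≤ v i T) :
    (∀ X X' : Fin n → Finset ι, CycleElim v X X' →
      (envyEdges v X').card < (envyEdges v X).card) ∧
    (∀ (m : ℕ) (Y : ℕ → Fin n → Finset ι),
      (∀ s < m, CycleElim v (Y s) (Y (s + 1))) → m ≤ n ^ 2 - 1) := by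
  classical
  refine ⟨cycleElim_card_lt v, ?_⟩
  intro m Y hY
  have key : ∀ s, s ≤ m → (envyEdges v (Y s)).card + s ≤ (envyEdges v (Y 0)).card := by
    intro s
    induction s with
    | zero => intro _; simp
    | succ s ih =>
      intro hs
      have h1 := cycleElim_card_lt v (Y s) (Y (s + 1)) (hY s (by omega))
      have h2 := ih (by omega)
      omega
  have hm : m ≤ (envyEdges v (Y 0)).card := by
    have := key m le_rfl
    omega
  rcases n with _ | n'
  · have h0 : (envyEdges v (Y 0)).card = 0 := by
      apply Finset.card_eq_zero.mpr
      apply Finset.eq_empty_of_forall_notMem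
      intro p _
      exact p.1.elim0
    omega
  · have hd : envyEdges v (Y 0) ⊆ Finset.univ.erase ((0 : Fin (n' + 1)), (0 : Fin (n' + 1))) := by
      intro p hp
      rw [Finset.mem_erase]
      refine ⟨?_, Finset.mem_univ _⟩
      intro hpe
      simp only [envyEdges, Finset.mem_filter] at hp
      rw [hpe] at hp
      exact lt_irrefl _ hp.2
    have hcard : (envyEdges v (Y 0)).card ≤ (n' + 1) * (n' + 1) - 1 := by
      calc (envyEdges v (Y 0)).card
          ≤ (Finset.univ.erase ((0 : Fin (n' + 1)), (0 : Fin (n' + 1)))).card :=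
            Finset.card_le_card hd
        _ = (n' + 1) * (n' + 1) - 1 := by
            rw [Finset.card_erase_of_mem (Finset.mem_univ _)]
            simp [Fintype.card_prod]
    have : (n' + 1) ^ 2 = (n' + 1) * (n' + 1) := pow_two (n' + 1)
    omega
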